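/- Let K ∈ {RC, DC, SC}, let A ∈ K_n be complete and atomic, and let N be a network over A. If f, g ∈ edges(N) and i ∈ n satisfy f ≡_i g, then c_i N(f) = c_i N(g). -/

import Mathlib

namespace CylRep

/-- The replacement `[i/j]` on `n`: fixes everything except sending `i` to `j`. -/
def replFn (n : ℕ) (i j : Fin n) : Fin n → Fin n := fun k => if k = i then j else k

/-- A Boolean algebra equipped with cylindric-type operators: cylindrifications `c i`
and diagonal elements `d i j`. -/
structure CylOps (n : ℕ) (α : Type*) [BooleanAlgebra α] where
  c : Fin n → α → α
  d : Fin n → Fin n → α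

variable {n : ℕ} {α : Type*} {β : Type*}

section Ops
variable [BooleanAlgebra α]

/-- The substitution operator `s^i_j`: `s^i_i x = x`, and `s^i_j x = c_i (x ⊓ d_{ij})` for `i ≠ j`. -/
def CylOps.s (A : CylOps n α) (i j : Fin n) (x : α) : α :=
  if i = j then x else A.c i (x ⊓ A.d i j)

/-- The operator `t^i_j`: `t^i_i x = x`, and `t^i_j x = c_i x ⊓ d_{ij}` for `i ≠ j`. -/
def CylOps.t (A : CylOps n α) (i j : Fin n) (x : α) : α :=
  if i = j then x else A.c i x ⊓ A.d i j

/-- The term `s^i_j c_j x ⊓ s^j_i c_i x ⊓ ∏_{k ≠ i,j} s^k_i s^i_j s^j_k c_k x`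
(the empty product, when `n = 2`, is `⊤`). -/
def CylOps.pRaw (A : CylOps n α) (i j : Fin n) (x : α) : α :=
  A.s i j (A.c j x) ⊓ A.s j i (A.c i x) ⊓
    (Finset.univ.filter (fun k : Fin n => k ≠ i ∧ k ≠ j)).inf
      (fun k => A.s k i (A.s i j (A.s j k (A.c k x))))

/-- The operator `p_{ij}`: `p_{ii} x = x`, and otherwise the term `pRaw`. -/
def CylOps.p (A : CylOps n α) (i j : Fin n) (x : α) : α :=
  if i = j then x else A.pRaw i j x

/-- `tauSeq is js t = [i_t/j_t] ∘ ⋯ ∘ [i_1/j_1]` (0-indexed: composes the first `t`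
replacements, the one of index `0` acting first); `tauSeq is js 0 = id`. -/
def tauSeq (is js : ℕ → Fin n) : ℕ → (Fin n → Fin n)
  | 0 => id
  | t + 1 => replFn n (is t) (js t) ∘ tauSeq is js t

/-- `lhsSeq A is js ks x m = s^{i_m}_{j_m} c_{k_m} ⋯ s^{i_1}_{j_1} c_{k_1} x` (0-indexed). -/
def lhsSeq (A : CylOps n α) (is js ks : ℕ → Fin n) (x : α) : ℕ → α
  | 0 => x
  | t + 1 => A.s (is t) (js t) (A.c (ks t) (lhsSeq A is js ks x t))

/-- The set `K = {i_1, …, i_m, k_1, …, k_m} \ {i}` (0-indexed). -/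
def Kset (m : ℕ) (is ks : ℕ → Fin n) (i : Fin n) : Finset (Fin n) :=
  (((Finset.range m).image is) ∪ ((Finset.range m).image ks)).erase i

/-- Axiom (Ax7): for every `m ≥ 1` and all indices `i_1,…,i_m, j_1,…,j_m, k_1,…,k_m, i`
such that `k_{t+1} ∉ ([i_t/j_t]∘⋯∘[i_1/j_1]) * K` for all `t < m`,
`s^{i_m}_{j_m} c_{k_m} ⋯ s^{i_1}_{j_1} c_{k_1} x ⊓ ∏ {d_{l, τ l} : l ∈ K} ≤ c_i x`,
where `τ = [i_m/j_m]∘⋯∘[i_1/j_1]` and `K = {i_1,…,i_m,k_1,…,k_m} \ {i}`. -/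
def Ax7 (A : CylOps n α) : Prop :=
  ∀ m : ℕ, 1 ≤ m → ∀ (is js ks : ℕ → Fin n) (i : Fin n),
    (∀ t < m, ks t ∉ (Kset m is ks i).image (tauSeq is js t)) →
    ∀ x : α,
      lhsSeq A is js ks x m ⊓
          (Kset m is ks i).inf (fun l => A.d l (tauSeq is js m l)) ≤
        A.c i x

/-- Axiom (Ax11) (stated for general `n` via proofs that `0 < n` and `1 < n`):
`x ⊓ -d_{01} ≤ c_0 c_1 (-d_{01} ⊓ s^0_1 c_1 x ⊓ s^1_0 c_0 x)`. -/
def Ax11 (A : CylOps n α) : Prop :=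
  ∀ (h0 : 0 < n) (h1 : 1 < n) (x : α),
    x ⊓ (A.d ⟨0, h0⟩ ⟨1, h1⟩)ᶜ ≤
      A.c ⟨0, h0⟩ (A.c ⟨1, h1⟩
        ((A.d ⟨0, h0⟩ ⟨1, h1⟩)ᶜ ⊓ A.s ⟨0, h0⟩ ⟨1, h1⟩ (A.c ⟨1, h1⟩ x) ⊓
          A.s ⟨1, h1⟩ ⟨0, h0⟩ (A.c ⟨0, h0⟩ x)))

/-- Axiom (Ax12): `x ≤ c_i c_j (s^i_j c_j x ⊓ s^j_i c_i x ⊓ ∏_{k≠i,j} s^k_i s^i_j s^j_k c_k x)`. -/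
def Ax12 (A : CylOps n α) : Prop :=
  ∀ (i j : Fin n) (x : α), x ≤ A.c i (A.c j (A.pRaw i j x))

/-- Axioms (Ax0)–(Ax6) ((Ax0), the Boolean axioms, being the `BooleanAlgebra` instance). -/
structure IsRC6 (A : CylOps n α) : Prop where
  ax1 : ∀ i, A.c i (⊥ : α) = ⊥
  ax2 : ∀ i (x : α), x ≤ A.c i x
  ax3 : ∀ i (x y : α), A.c i (x ⊓ A.c i y) = A.c i x ⊓ A.c i y
  ax4 : ∀ i, A.d i i = (⊤ : α)
  ax5 : ∀ i j k : Fin n, k ≠ i → k ≠ j →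
    A.d i k ⊓ A.d k j ≤ A.d i j ∧ A.d i j = A.d j i ∧ A.d j i = A.c k (A.d j i)
  ax6 : ∀ (i j : Fin n) (x : α), i ≠ j → A.c i (x ⊓ A.d i j) ⊓ A.d i j ≤ x

/-- The class `RC_n`: axioms (Ax0)–(Ax7). -/
structure IsRC (A : CylOps n α) extends IsRC6 A : Prop where
  ax7 : Ax7 A

/-- Axioms (Ax8)–(Ax10). -/
structure DCAxioms (A : CylOps n α) : Prop where
  ax8 : ∀ (i j k : Fin n) (x : α), k ≠ i → k ≠ j →
    A.c j (A.c i x) ⊓ A.d j k ≤ A.c i (A.c j x)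
  ax9 : ∀ i j k : Fin n, k ≠ i → k ≠ j → A.d i j = A.c k (A.d i k ⊓ A.d k j)
  ax10 : ∀ (i j k m : Fin n) (x : α), k ≠ i → k ≠ j → k ≠ m → m ≠ i → m ≠ j →
    A.s k i (A.s i j (A.s j m (A.s m k (A.c k x)))) =
      A.s k m (A.s m i (A.s i j (A.s j k (A.c k x))))

/-- The class `DC_n`: axioms (Ax0)–(Ax10). -/
structure IsDC (A : CylOps n α) extends IsRC A, DCAxioms A : Prop

/-- The class `SC_n`: `DC_n` together with (Ax11) when `n = 2` and (Ax12) when `n ≥ 3`. -/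
structure IsSC (A : CylOps n α) extends IsDC A : Prop where
  ax11 : n = 2 → Ax11 A
  ax12 : 3 ≤ n → Ax12 A

/-- The class `DC_n⁻`: the axioms of `DC_n` with (Ax7) omitted. -/
structure IsDCminus (A : CylOps n α) extends IsRC6 A, DCAxioms A : Prop

/-- The class `SC_n⁻`: the axioms of `SC_n` with (Ax7) omitted. -/
structure IsSCminus (A : CylOps n α) extends IsDCminus A : Prop where
  ax11 : n = 2 → Ax11 A
  ax12 : 3 ≤ n → Ax12 A

/-- `compList n [(i₁,j₁),…,(iₘ,jₘ)] = [i₁/j₁] ∘ ⋯ ∘ [iₘ/jₘ]` (so `[iₘ/jₘ]` acts first). -/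
def compList (n : ℕ) (L : List (Fin n × Fin n)) : Fin n → Fin n :=
  L.foldr (fun p g => replFn n p.1 p.2 ∘ g) id

/-- `tApplyList A [(i₁,j₁),…,(iₘ,jₘ)] x = t^{iₘ}_{jₘ} ⋯ t^{i₁}_{j₁} x`. -/
def tApplyList (A : CylOps n α) (L : List (Fin n × Fin n)) (x : α) : α :=
  L.foldl (fun y p => A.t p.1 p.2 y) x

end Ops

/-- The three classes of algebras considered. -/
inductive CylClass : Type
  | RC | DC | SC

/-- Membership of `A` in the class `K_n` for `K ∈ {RC, DC, SC}`. -/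
def InClass [BooleanAlgebra α] (κ : CylClass) (A : CylOps n α) : Prop :=
  match κ with
  | CylClass.RC => IsRC A
  | CylClass.DC => IsDC A
  | CylClass.SC => IsSC A

/-- A pre-network: a finite set of nodes together with a partial map (here: a total map
`label` whose meaningful domain is `edges`) from `n`-sequences of nodes to atoms of `α`. -/
structure PreNetwork (n : ℕ) (α : Type*) (β : Type*) [BooleanAlgebra α] where
  nodes : Finset β
  edges : Set (Fin n → β)
  label : (Fin n → β) → α
  edge_nodes : ∀ f ∈ edges, ∀ i, f i ∈ nodes
  label_atom : ∀ f ∈ edges, IsAtom (label f)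

/-- `g ≡_i f`: the sequences agree everywhere except possibly at `i`. -/
def EqExcept (i : Fin n) (f g : Fin n → β) : Prop := ∀ l, l ≠ i → f l = g l

/-- A set of sequences is diagonalizable if it is closed under `f ↦ f ∘ [i/j]`. -/
def Diagonalizable (E : Set (Fin n → β)) : Prop :=
  ∀ f ∈ E, ∀ i j : Fin n, (f ∘ replFn n i j) ∈ E

/-- A set of sequences is permutable if it is closed under `f ↦ f ∘ [i,j]`. -/
def Permutable (E : Set (Fin n → β)) : Prop :=
  ∀ f ∈ E, ∀ i j : Fin n, (fun k => f (Equiv.swap i j k)) ∈ E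

section Net
variable [BooleanAlgebra α]

/-- `h 0, …, h m` is a zigzag from `f` to `g` in the pre-network `N`. -/
def IsZigzag (A : CylOps n α) (N : PreNetwork n α β) (f g : Fin n → β)
    (m : ℕ) (h : ℕ → Fin n → β) : Prop :=
  h 0 = f ∧ h m = g ∧ (∀ t ≤ m, h t ∈ N.edges) ∧
    (∀ t ≤ m, Set.range f ∩ Set.range g ⊆ Set.range (h t)) ∧
    (∀ t < m, ∃ i : Fin n, h t ≠ h (t + 1) ∧ EqExcept i (h t) (h (t + 1)) ∧
      A.c i (N.label (h t)) = A.c i (N.label (h (t + 1))))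

/-- `N` is a network (for the class `κ` over the algebra `A`). -/
def IsNetwork (κ : CylClass) (A : CylOps n α) (N : PreNetwork n α β) : Prop :=
  (κ = CylClass.DC → Diagonalizable N.edges) ∧
  (κ = CylClass.SC → Diagonalizable N.edges ∧ Permutable N.edges) ∧
  (∀ f ∈ N.edges, ∀ i j : Fin n, N.label f ≤ A.d i j ↔ f i = f j) ∧
  (∀ f ∈ N.edges, ∀ g ∈ N.edges,
    0 < (Set.range f ∩ Set.range g).ncard →
    (Set.range f ∩ Set.range g).ncard < n →
    ∃ m h, IsZigzag A N f g m h)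

/-- `N ⊆ N'` for pre-networks. -/
def PNLe (N N' : PreNetwork n α β) : Prop :=
  N.nodes ⊆ N'.nodes ∧ N.edges ⊆ N'.edges ∧ ∀ f ∈ N.edges, N'.label f = N.label f

end Net

/-- The cylindrification `C_i` relativized to the unit `V`. -/
def CSet (V : Set (Fin n → β)) (i : Fin n) (X : Set (Fin n → β)) : Set (Fin n → β) :=
  {f ∈ V | ∃ g ∈ X, ∀ l, l ≠ i → g l = f l}

/-- The diagonal `D_{ij}` relativized to the unit `V`. -/
def DSet (V : Set (Fin n → β)) (i j : Fin n) : Set (Fin n → β) :=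
  {f ∈ V | f i = f j}

/-- `Ψ` is an embedding of `A` into the full relativized cylindric set algebra `P(V)`:
an injective Boolean homomorphism that sends `c_i` to `C_i` and `d_{ij}` to `D_{ij}`. -/
def IsRepresentation [BooleanAlgebra α] (A : CylOps n α) (V : Set (Fin n → β))
    (Ψ : α → Set (Fin n → β)) : Prop :=
  Function.Injective Ψ ∧ (∀ x, Ψ x ⊆ V) ∧
    Ψ ⊥ = ∅ ∧ Ψ ⊤ = V ∧ (∀ x y, Ψ (x ⊔ y) = Ψ x ∪ Ψ y) ∧
    (∀ x y, Ψ (x ⊓ y) = Ψ x ∩ Ψ y) ∧ (∀ x, Ψ xᶜ = V \ Ψ x) ∧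
    (∀ (i : Fin n) (x : α), Ψ (A.c i x) = CSet V i (Ψ x)) ∧
    (∀ i j : Fin n, Ψ (A.d i j) = DSet V i j)



section Statement6Aux
variable {n : ℕ} {α : Type*} {γ : Type*} [BooleanAlgebra α]

lemma c_mono6 {A : CylOps n α} (h6 : IsRC6 A) (i : Fin n) {x y : α} (h : x ≤ y) :
    A.c i x ≤ A.c i y := by
  have h1 : x ⊓ A.c i y = x := inf_eq_left.2 (h.trans (h6.ax2 i y))
  calc A.c i x = A.c i (x ⊓ A.c i y) := by rw [h1]
    _ = A.c i x ⊓ A.c i y := h6.ax3 i x y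
    _ ≤ A.c i y := inf_le_right

lemma c_idem6 {A : CylOps n α} (h6 : IsRC6 A) (i : Fin n) (x : α) :
    A.c i (A.c i x) = A.c i x := by
  refine le_antisymm ?_ (h6.ax2 i _)
  have h3 := h6.ax3 i ⊤ x
  rw [top_inf_eq] at h3
  rw [h3]
  exact inf_le_right

lemma le_s6 {A : CylOps n α} (h6 : IsRC6 A) {a y : α} {i j : Fin n}
    (hy : a ≤ y) (hd : i ≠ j → a ≤ A.d i j) : a ≤ A.s i j y := by
  unfold CylOps.s
  split_ifs with hij
  · exact hy
  · exact (le_inf hy (hd hij)).trans (h6.ax2 i _)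

lemma key6 {A : CylOps n α} (hA : IsRC A) (N : PreNetwork n α γ)
    (hdiag : ∀ f ∈ N.edges, ∀ i j : Fin n, N.label f ≤ A.d i j ↔ f i = f j)
    (f g : Fin n → γ) (i : Fin n) (hfg : EqExcept i f g)
    (m : ℕ) (h : ℕ → Fin n → γ) (hz : IsZigzag A N f g m h) :
    N.label f ≤ A.c i (N.label g) := by
  classical
  obtain ⟨h0, hm, hedge, hrng, hstep⟩ := hz
  set x := N.label g with hxdef
  set E : ℕ → Fin n → γ := fun s => if s = 0 then g else h (m + 1 - s) with hEdef
  have hE0 : E 0 = g := by simp [hEdef]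
  have hEs : ∀ t, 1 ≤ t → E t = h (m + 1 - t) := by
    intro t ht
    simp only [hEdef]
    rw [if_neg (by omega)]
  have hE1 : E 1 = g := by rw [hEs 1 le_rfl]; simpa using hm
  have hEedge : ∀ t, E t ∈ N.edges := by
    intro t
    rcases Nat.eq_zero_or_pos t with h1 | h1
    · rw [h1, hE0, ← hm]; exact hedge m le_rfl
    · rw [hEs t h1]; exact hedge _ (by omega)
  set e : ℕ → Fin n := fun t => if ht : t < m then Classical.choose (hstep t ht) else i
    with hedef
  have hespec : ∀ t (ht : t < m), h t ≠ h (t+1) ∧ EqExcept (e t) (h t) (h (t+1)) ∧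
      A.c (e t) (N.label (h t)) = A.c (e t) (N.label (h (t+1))) := by
    intro t ht
    have he : e t = Classical.choose (hstep t ht) := by simp [hedef, ht]
    rw [he]
    exact Classical.choose_spec (hstep t ht)
  set ks : ℕ → Fin n := fun t => if t = 0 then i else e (m - t) with hksdef
  have hks0 : ks 0 = i := by simp [hksdef]
  have hkss : ∀ t, 1 ≤ t → ks t = e (m - t) := by
    intro t ht; simp only [hksdef]; rw [if_neg (by omega)]
  have hEstep : ∀ t, 1 ≤ t → t ≤ m →
      E (t+1) ≠ E t ∧ EqExcept (ks t) (E (t+1)) (E t) ∧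
        A.c (ks t) (N.label (E (t+1))) = A.c (ks t) (N.label (E t)) := by
    intro t h1 h2
    have hlt : m - t < m := by omega
    have e1 : E (t+1) = h (m - t) := by
      have harith : m + 1 - (t + 1) = m - t := by omega
      rw [hEs (t+1) (by omega), harith]
    have e2 : E t = h (m - t + 1) := by
      have harith : m + 1 - t = m - t + 1 := by omega
      rw [hEs t h1, harith]
    have hk : ks t = e (m - t) := hkss t h1
    obtain ⟨hne, heq, hc⟩ := hespec (m - t) hlt
    rw [e1, e2, hk]
    exact ⟨hne, heq, hc⟩
  set P : ℕ → Prop := fun t => t < m ∧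
      ∃ q : Fin n, q ≠ ks (t+1) ∧ E (t+1) q = E (t+1) (ks (t+1)) with hPdef
  set isq : ℕ → Fin n := fun t => if ht : P t then ks (t+1) else i with hisdef
  set jsq : ℕ → Fin n := fun t => if ht : P t then Classical.choose ht.2 else i with hjsdef
  have hJspec : ∀ t (ht : P t), jsq t = Classical.choose ht.2 := by
    intro t ht
    simp only [hjsdef]
    exact dif_pos ht
  have hIJ : ∀ t, (∀ ht : P t, isq t = ks (t+1) ∧ jsq t ≠ ks (t+1) ∧
        E (t+1) (jsq t) = E (t+1) (ks (t+1))) ∧ (¬ P t → isq t = i ∧ jsq t = i) := by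
    intro t
    refine ⟨fun ht => ?_, fun ht => ?_⟩
    · have hspec := Classical.choose_spec ht.2
      rw [← hJspec t ht] at hspec
      have hi1 : isq t = ks (t+1) := by
        simp only [hisdef]
        exact dif_pos ht
      exact ⟨hi1, hspec.1, hspec.2⟩
    · constructor
      · simp only [hisdef]
        exact dif_neg ht
      · simp only [hjsdef]
        exact dif_neg ht
  have INV : ∀ t, t ≤ m + 1 →
      (N.label (E t) ≤ lhsSeq A isq jsq ks x t) ∧
      (∀ l : Fin n, l ≠ i → E t (tauSeq isq jsq t l) = g l) ∧
      (t ≤ m → ∀ l : Fin n, l ≠ i → tauSeq isq jsq t l ≠ ks t) := by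
    intro t
    induction t with
    | zero =>
      intro _
      refine ⟨le_of_eq (by rw [hE0]; rfl), ?_, ?_⟩
      · intro l _; rw [hE0]; rfl
      · intro _ l hl
        simpa [tauSeq, hks0] using hl
    | succ t ih =>
      intro ht1
      have htm : t ≤ m := by omega
      obtain ⟨iha, ihb, ihc⟩ := ih (by omega)
      have ihc' := ihc htm
      have hagree : ∀ p : Fin n, p ≠ ks t → E t p = E (t+1) p := by
        intro p hp
        rcases Nat.eq_zero_or_pos t with h0t | h0t
        · subst h0t; rw [hE0, hE1]
        · exact ((hEstep t h0t htm).2.1 p hp).symm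
      have hc1 : N.label (E (t+1)) ≤ A.c (ks t) (N.label (E t)) := by
        rcases Nat.eq_zero_or_pos t with h0t | h0t
        · subst h0t
          rw [hE1, hE0]
          exact hA.ax2 (ks 0) _
        · rw [← (hEstep t h0t htm).2.2]
          exact hA.ax2 _ _
      have hv0 : ∀ l : Fin n, l ≠ i → E (t+1) (tauSeq isq jsq t l) = g l := by
        intro l hl
        rw [← hagree _ (ihc' l hl)]
        exact ihb l hl
      have ha : N.label (E (t+1)) ≤ lhsSeq A isq jsq ks x (t+1) := by
        show N.label (E (t+1)) ≤ A.s (isq t) (jsq t) (A.c (ks t) (lhsSeq A isq jsq ks x t))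
        refine le_s6 hA.toIsRC6 (hc1.trans (c_mono6 hA.toIsRC6 _ iha)) ?_
        intro hne
        by_cases hPt : P t
        · obtain ⟨hi1, hj1, hj2⟩ := (hIJ t).1 hPt
          rw [hdiag _ (hEedge (t+1)) (isq t) (jsq t), hi1, hj2]
        · obtain ⟨hi1, hj1⟩ := (hIJ t).2 hPt
          exact absurd (hi1.trans hj1.symm) hne
      have hb : ∀ l : Fin n, l ≠ i → E (t+1) (tauSeq isq jsq (t+1) l) = g l := by
        intro l hl
        have hv := hv0 l hl
        show E (t+1) (replFn n (isq t) (jsq t) (tauSeq isq jsq t l)) = g l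
        simp only [replFn]
        by_cases hcase : tauSeq isq jsq t l = isq t
        · rw [if_pos hcase]
          by_cases hPt : P t
          · obtain ⟨hi1, hj1, hj2⟩ := (hIJ t).1 hPt
            rw [hj2, ← hi1, ← hcase]
            exact hv
          · obtain ⟨hi1, hj1⟩ := (hIJ t).2 hPt
            rw [hj1, ← hi1, ← hcase]
            exact hv
        · rw [if_neg hcase]
          exact hv
      have hc : t + 1 ≤ m → ∀ l : Fin n, l ≠ i → tauSeq isq jsq (t+1) l ≠ ks (t+1) := by
        intro htm1 l hl
        show replFn n (isq t) (jsq t) (tauSeq isq jsq t l) ≠ ks (t+1)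
        simp only [replFn]
        by_cases hPt : P t
        · obtain ⟨hi1, hj1, hj2⟩ := (hIJ t).1 hPt
          split_ifs with hcase
          · exact hj1
          · rw [hi1] at hcase
            exact hcase
        · obtain ⟨hi1, hj1⟩ := (hIJ t).2 hPt
          have hnot : ¬ ∃ q : Fin n, q ≠ ks (t+1) ∧ E (t+1) q = E (t+1) (ks (t+1)) := by
            intro hq
            exact hPt ⟨by omega, hq⟩
          have hred : (if tauSeq isq jsq t l = isq t then jsq t else tauSeq isq jsq t l)
              = tauSeq isq jsq t l := by
            split_ifs with hcase
            · rw [hj1, ← hi1, ← hcase]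
            · rfl
          rw [hred]
          intro hcon
          have hvk : E (t+1) (ks (t+1)) = g l := by
            rw [← hcon]; exact hv0 l hl
          have hmemv : g l ∈ Set.range f ∩ Set.range g := ⟨⟨l, hfg l hl⟩, ⟨l, rfl⟩⟩
          have hE2 : E (t+2) = h (m - t - 1) := by
            have harith : m + 1 - (t + 2) = m - t - 1 := by omega
            rw [hEs (t+2) (by omega), harith]
          obtain ⟨q, hq⟩ := hrng (m - t - 1) (by omega) hmemv
          rw [← hE2] at hq
          obtain ⟨hne2, heq2, -⟩ := hEstep (t+1) (by omega) htm1
          have hqne : q ≠ ks (t+1) := by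
            intro hqk
            apply hne2
            funext p
            by_cases hpk : p = ks (t+1)
            · rw [hqk] at hq
              rw [hpk]
              exact hq.trans hvk.symm
            · exact heq2 p hpk
          apply hnot
          refine ⟨q, hqne, ?_⟩
          calc E (t+1) q = E (t+2) q := (heq2 q hqne).symm
            _ = g l := hq
            _ = E (t+1) (ks (t+1)) := hvk.symm
      exact ⟨ha, hb, hc⟩
  obtain ⟨ha, hb, -⟩ := INV (m+1) le_rfl
  have hEm1 : E (m+1) = f := by
    rw [hEs (m+1) (by omega)]
    simpa using h0
  have hf' : f ∈ N.edges := h0 ▸ hedge 0 (Nat.zero_le m)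
  have hside : ∀ t < m + 1, ks t ∉ (Kset (m+1) isq ks i).image (tauSeq isq jsq t) := by
    intro t htlt hmem
    obtain ⟨l, hlK, hle⟩ := Finset.mem_image.mp hmem
    have hlne : l ≠ i := Finset.ne_of_mem_erase hlK
    rcases Nat.eq_zero_or_pos t with h0t | h0t
    · subst h0t
      rw [hks0] at hle
      simp only [tauSeq, id] at hle
      exact hlne hle
    · obtain ⟨-, -, ihc⟩ := INV t (by omega)
      exact ihc (by omega) l hlne hle
  have hdprod : N.label f ≤ (Kset (m+1) isq ks i).inf
      (fun l => A.d l (tauSeq isq jsq (m+1) l)) := by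
    refine Finset.le_inf ?_
    intro l hlK
    have hlne : l ≠ i := Finset.ne_of_mem_erase hlK
    rw [hdiag f hf' l (tauSeq isq jsq (m+1) l)]
    have hbl := hb l hlne
    rw [hEm1] at hbl
    rw [hbl]
    exact hfg l hlne
  have hax7 := hA.ax7 (m+1) (by omega) isq jsq ks i hside x
  have hlhs : N.label f ≤ lhsSeq A isq jsq ks x (m+1) := by
    rw [← hEm1]; exact ha
  exact (le_inf hlhs hdprod).trans hax7

end Statement6Aux

/-- for `K ∈ {RC, DC, SC}`, complete atomic `A ∈ K_n` and a network `N`: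
if `f, g ∈ edges(N)` and `f ≡_i g` then `c_i N(f) = c_i N(g)`. -/
theorem statement_6 (n : ℕ) (hn : 2 ≤ n) {α : Type*} {β : Type*}
    [CompleteBooleanAlgebra α] [IsAtomic α]
    (κ : CylClass) (A : CylOps n α) (hA : InClass κ A)
    (N : PreNetwork n α β) (hN : IsNetwork κ A N)
    (f g : Fin n → β) (hf : f ∈ N.edges) (hg : g ∈ N.edges)
    (i : Fin n) (hfg : EqExcept i f g) :
    A.c i (N.label f) = A.c i (N.label g) := by
  classical
  have hRC : IsRC A := by
    cases κ with
    | RC => exact hA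
    | DC => exact hA.toIsRC
    | SC => exact hA.toIsRC
  obtain ⟨-, -, hdiag, hzz⟩ := hN
  by_cases hfgeq : f = g
  · rw [hfgeq]
  · have hS : (Set.range f ∩ Set.range g).Finite :=
      (Set.finite_range f).subset Set.inter_subset_left
    obtain ⟨l0, hl0⟩ := Fintype.exists_ne_of_one_lt_card (by rw [Fintype.card_fin]; omega) i
    have hmem : f l0 ∈ Set.range f ∩ Set.range g := ⟨⟨l0, rfl⟩, ⟨l0, (hfg l0 hl0).symm⟩⟩
    have hpos : 0 < (Set.range f ∩ Set.range g).ncard := (Set.ncard_pos hS).2 ⟨_, hmem⟩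
    have hlt : (Set.range f ∩ Set.range g).ncard < n := by
      by_contra hge
      push_neg at hge
      have hcardg : (Set.range g).ncard ≤ n := by
        have h1 : (Set.range g).ncard ≤ (Set.univ : Set (Fin n)).ncard := by
          rw [← Set.image_univ]
          exact Set.ncard_image_le Set.finite_univ
        simpa [Set.ncard_univ] using h1
      have heqg : Set.range f ∩ Set.range g = Set.range g :=
        Set.eq_of_subset_of_ncard_le Set.inter_subset_right
          (le_trans hcardg hge) (Set.finite_range g)
      have hcardg' : (Set.range g).ncard = n :=
        le_antisymm hcardg (by rw [← heqg]; exact hge)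
      have hginj : Function.Injective g := by
        rw [← Set.injOn_univ, ← Finset.coe_univ]
        rw [← Finset.card_image_iff]
        have hcoe : ((Finset.univ.image g : Finset β) : Set β) = Set.range g := by
          rw [Finset.coe_image, Finset.coe_univ, Set.image_univ]
        have := Set.ncard_coe_finset (Finset.univ.image g : Finset β)
        rw [hcoe, hcardg'] at this
        rw [← this]
        simp
      have hgi : g i ∈ Set.range f := by
        have h1 : g i ∈ Set.range g := ⟨i, rfl⟩
        rw [← heqg] at h1
        exact h1.1
      obtain ⟨l, hlg⟩ := hgi
      rcases eq_or_ne l i with hli | hli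
      · rw [hli] at hlg
        apply hfgeq
        funext p
        by_cases hp : p = i
        · rw [hp]; exact hlg
        · exact hfg p hp
      · have : g l = g i := by rw [← hfg l hli]; exact hlg
        exact hli (hginj this)
    obtain ⟨mz, hzf, hzz1⟩ := hzz f hf g hg hpos hlt
    have h1 : N.label f ≤ A.c i (N.label g) := key6 hRC N hdiag f g i hfg mz hzf hzz1
    have hgf : EqExcept i g f := fun l hl => (hfg l hl).symm
    have hpos' : 0 < (Set.range g ∩ Set.range f).ncard := by rwa [Set.inter_comm]
    have hlt' : (Set.range g ∩ Set.range f).ncard < n := by rwa [Set.inter_comm]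
    obtain ⟨mz2, hzf2, hzz2⟩ := hzz g hg f hf hpos' hlt'
    have h2 : N.label g ≤ A.c i (N.label f) := key6 hRC N hdiag g f i hgf mz2 hzf2 hzz2
    apply le_antisymm
    · have := c_mono6 hRC.toIsRC6 i h1
      rwa [c_idem6 hRC.toIsRC6] at this
    · have := c_mono6 hRC.toIsRC6 i h2
      rwa [c_idem6 hRC.toIsRC6] at this

end CylRep
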